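/- Let n ∈ ℕ and let f₁, f₂, g be real-valued functions on ℝ, each n times differentiable. Then for all nonnegative integers s₁, s₂ with s₁ + s₂ = n, Σ_{k=0}^{n} (-1)^k · C(n,k) · (f₁ · g^k)^{(s₁)} · (f₂ · g^{n-k})^{(s₂)} = (-1)^{s₁} · n! · f₁ · f₂ · (g')^n, where C(n,k) is the binomial coefficient and h^{(m)} denotes the m-th derivative of h. -/

import Mathlib

open scoped BigOperators
open Finset

private lemma aux_key : ∀ (m : ℕ) (j : ℕ) (f g : ℝ → ℝ) (c x : ℝ),
    ContDiff ℝ (m : ℕ∞) f → ContDiff ℝ (m : ℕ∞) g → g x = c → m ≤ j →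
    iteratedDeriv m (fun t => f t * (g t - c) ^ j) x =
      if m = j then (m.factorial : ℝ) * f x * (deriv g x) ^ m else 0 := by
  intro m
  induction m with
  | zero =>
    intro j f g c x hf hg hx hmj
    rcases Nat.eq_zero_or_pos j with rfl | hj
    · simp
    · rw [if_neg (by omega)]
      simp [iteratedDeriv_zero, hx, zero_pow hj.ne']
  | succ m IH =>
    intro j f g c x hf hg hx hmj
    obtain ⟨j, rfl⟩ : ∃ j', j = j' + 1 := ⟨j - 1, by omega⟩
    have hf1 : ContDiff ℝ ((m : ℕ∞) + 1) f := by exact_mod_cast hf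
    have hg1 : ContDiff ℝ ((m : ℕ∞) + 1) g := by exact_mod_cast hg
    have hfd : Differentiable ℝ f := (contDiff_succ_iff_deriv.mp hf1).1
    have hgd : Differentiable ℝ g := (contDiff_succ_iff_deriv.mp hg1).1
    have hf' : ContDiff ℝ (m : ℕ∞) (deriv f) := (contDiff_succ_iff_deriv.mp hf1).2.2
    have hg' : ContDiff ℝ (m : ℕ∞) (deriv g) := (contDiff_succ_iff_deriv.mp hg1).2.2
    have hfm : ContDiff ℝ (m : ℕ∞) f := hf.of_le (by exact_mod_cast Nat.cast_le.mpr (Nat.le_succ m))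
    have hgm : ContDiff ℝ (m : ℕ∞) g := hg.of_le (by exact_mod_cast Nat.cast_le.mpr (Nat.le_succ m))
    set F : ℝ → ℝ := fun t => deriv f t * (g t - c) + ((j : ℝ) + 1) * f t * deriv g t with hF
    have hFc : ContDiff ℝ (m : ℕ∞) F :=
      (hf'.mul (hgm.sub contDiff_const)).add ((contDiff_const.mul hfm).mul hg')
    have hderiv : deriv (fun t => f t * (g t - c) ^ (j + 1))
        = fun t => F t * (g t - c) ^ j := by
      funext t
      have h1 : DifferentiableAt ℝ (fun y => (g y - c)) t := (hgd t).sub_const c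
      rw [deriv_fun_mul (hfd t) (h1.fun_pow (j + 1)), deriv_fun_pow h1 (j + 1),
        deriv_sub_const, Nat.add_sub_cancel]
      push_cast
      ring
    rw [iteratedDeriv_succ', hderiv]
    rw [IH j F g c x hFc hgm hx (by omega)]
    by_cases h : m = j
    · subst h
      rw [if_pos rfl, if_pos rfl, hF]
      simp only [hx, sub_self, mul_zero, zero_add, zero_mul]
      rw [Nat.factorial_succ]
      push_cast
      ring
    · rw [if_neg h, if_neg (by omega)]

private lemma aux_choose_swap (M m j : ℕ) :
    M.choose m * (M - m).choose j = M.choose j * (M - j).choose m := by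
  by_cases h1 : m + j ≤ M
  · have hm : m ≤ M := by omega
    have hj : j ≤ M - m := by omega
    rw [← Nat.choose_symm hm, Nat.choose_mul hj]
    congr 1
    rw [← Nat.choose_symm (by omega : m ≤ M - j)]
    congr 1
    omega
  · by_cases hm : m ≤ M
    · rw [Nat.choose_eq_zero_of_lt (by omega : M - m < j), Nat.mul_zero]
      by_cases hj : j ≤ M
      · rw [Nat.choose_eq_zero_of_lt (by omega : M - j < m), Nat.mul_zero]
      · rw [Nat.choose_eq_zero_of_lt (by omega : M < j), Nat.zero_mul]
    · rw [Nat.choose_eq_zero_of_lt (by omega : M < m), Nat.zero_mul]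
      by_cases hj : j ≤ M
      · rw [Nat.choose_eq_zero_of_lt (by omega : M - j < m), Nat.mul_zero]
      · rw [Nat.choose_eq_zero_of_lt (by omega : M < j), Nat.zero_mul]

private lemma aux_alt (N : ℕ) (hN : N ≠ 0) :
    ∑ m ∈ range (N + 1), (-1 : ℝ) ^ m * (N.choose m : ℕ) = 0 := by
  exact_mod_cast congrArg (Int.cast : ℤ → ℝ) (Int.alternating_sum_range_choose_of_ne hN)

private lemma aux_S (n i j : ℕ) (hij : i + j < n) :
    ∑ k ∈ range (n + 1), (-1 : ℝ) ^ k * ((n.choose k * k.choose i * (n - k).choose j : ℕ) : ℝ)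
      = 0 := by
  have hi : i ≤ n := by omega
  have hsub : Finset.Ico i (n+1) ⊆ range (n+1) := by
    intro k hk; simp only [Finset.mem_Ico, mem_range] at *; omega
  rw [← Finset.sum_subset hsub ?zero]
  case zero =>
    intro k hk hk'
    simp only [Finset.mem_Ico, Finset.mem_range] at hk hk'
    have : k < i := by omega
    rw [Nat.choose_eq_zero_of_lt this]
    simp
  rw [Finset.sum_Ico_eq_sum_range]
  have hrange : n + 1 - i = (n - i) + 1 := by omega
  rw [hrange]
  have hstep : ∀ m ∈ range ((n - i) + 1),
      (-1:ℝ) ^ (i + m) * ((n.choose (i+m) * (i+m).choose i * (n - (i+m)).choose j : ℕ) : ℝ)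
      = ((-1:ℝ)^i * (n.choose i : ℕ) * ((n-i).choose j : ℕ)) *
        ((-1:ℝ)^m * (((n-i) - j).choose m : ℕ)) := by
    intro m hm
    simp only [mem_range] at hm
    have h1 : n.choose (i+m) * (i+m).choose i = n.choose i * (n - i).choose m := by
      rw [Nat.choose_mul (by omega : i ≤ i + m)]
      congr 1
      congr 1
      omega
    have h2 : (n - (i+m)).choose j = ((n-i) - m).choose j := by congr 1; omega
    have h3 : (n-i).choose m * ((n-i) - m).choose j = (n-i).choose j * ((n-i) - j).choose m :=
      aux_choose_swap (n-i) m j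
    rw [h2, show n.choose (i+m) * (i+m).choose i * ((n-i) - m).choose j
        = n.choose i * ((n-i).choose m * ((n-i)-m).choose j) by rw [h1]; ring, h3]
    push_cast
    rw [pow_add]
    ring
  rw [Finset.sum_congr rfl hstep, ← Finset.mul_sum]
  have : ∑ m ∈ range ((n-i) + 1), (-1:ℝ)^m * (((n-i) - j).choose m : ℕ) = 0 := by
    have hnij : (n - i) - j ≠ 0 := by omega
    rw [← Finset.sum_subset (Finset.range_subset_range.mpr (by omega : ((n-i)-j) + 1 ≤ (n-i) + 1)) ?z2]
    case z2 =>
      intro k hk hk'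
      simp only [mem_range] at hk hk'
      rw [Nat.choose_eq_zero_of_lt (by omega)]
      simp
    exact aux_alt _ hnij
  rw [this, mul_zero]

private lemma aux_sum_id {ι : Type*} (m : ℕ) (s : Finset ι) (F : ι → ℝ → ℝ)
    (h : ∀ i ∈ s, ContDiff ℝ (m : ℕ∞) (F i)) (x : ℝ) :
    iteratedDeriv m (fun t => ∑ i ∈ s, F i t) x = ∑ i ∈ s, iteratedDeriv m (F i) x := by
  classical
  induction s using Finset.induction with
  | empty =>
    clear h
    have : iteratedDeriv m (fun _ : ℝ => (0:ℝ)) x = 0 := by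
      rw [iteratedDeriv_eq_iterate]
      induction m with
      | zero => simp
      | succ m ih =>
        rw [Function.iterate_succ_apply]
        simp only [deriv_const']
        exact ih
    simpa using this
  | @insert a s hne ih =>
    simp only [Finset.sum_insert hne]
    have hadd : iteratedDeriv m (fun t => F a t + ∑ i ∈ s, F i t) x
        = iteratedDeriv m (F a) x + iteratedDeriv m (fun t => ∑ i ∈ s, F i t) x := by
      simp only [← iteratedDerivWithin_univ]
      exact iteratedDerivWithin_add (Set.mem_univ x) uniqueDiffOn_univ
        (h a (Finset.mem_insert_self a s)).contDiffAt.contDiffWithinAt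
        (ContDiff.contDiffAt (ContDiff.sum fun i hi => h i (Finset.mem_insert_of_mem hi))).contDiffWithinAt
    rw [hadd, ih fun i hi => h i (Finset.mem_insert_of_mem hi)]

private lemma aux_cmul (m : ℕ) (a : ℝ) {f : ℝ → ℝ} (hf : ContDiff ℝ (m : ℕ∞) f) (x : ℝ) :
    iteratedDeriv m (fun t => a * f t) x = a * iteratedDeriv m f x := by
  simp only [← iteratedDerivWithin_univ]
  exact iteratedDerivWithin_const_mul (Set.mem_univ x) uniqueDiffOn_univ a hf.contDiffAt.contDiffWithinAt

private lemma aux_expand (n s k : ℕ) (hk : k ≤ n) (f g : ℝ → ℝ) (c : ℝ)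
    (hf : ContDiff ℝ (s : ℕ∞) f) (hg : ContDiff ℝ (s : ℕ∞) g) (x : ℝ) :
    iteratedDeriv s (fun t => f t * g t ^ k) x
      = ∑ i ∈ range (n + 1), (k.choose i : ℝ) * c ^ (k - i) *
          iteratedDeriv s (fun t => f t * (g t - c) ^ i) x := by
  have hfun : (fun t => f t * g t ^ k)
      = fun t => ∑ i ∈ range (n + 1),
          ((k.choose i : ℝ) * c ^ (k - i)) * (f t * (g t - c) ^ i) := by
    funext t
    have h1 : g t ^ k = ((g t - c) + c) ^ k := by ring
    rw [h1, add_pow, Finset.mul_sum]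
    rw [← Finset.sum_subset (Finset.range_subset_range.mpr (by omega : k + 1 ≤ n + 1))]
    · exact Finset.sum_congr rfl fun i hi => by ring
    · intro i hi hi'
      simp only [mem_range] at hi hi'
      rw [Nat.choose_eq_zero_of_lt (by omega)]
      simp
  rw [hfun, aux_sum_id]
  · refine Finset.sum_congr rfl fun i hi => ?_
    exact aux_cmul s _ (hf.mul ((hg.sub contDiff_const).pow i)) x
  · intro i hi
    exact contDiff_const.mul (hf.mul ((hg.sub contDiff_const).pow i))

theorem stmt_4 (n : ℕ) (f₁ f₂ g : ℝ → ℝ)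
    (hf₁ : ContDiff ℝ (n : ℕ∞) f₁) (hf₂ : ContDiff ℝ (n : ℕ∞) f₂)
    (hg : ContDiff ℝ (n : ℕ∞) g)
    (s₁ s₂ : ℕ) (hs : s₁ + s₂ = n) (x : ℝ) :
    ∑ k ∈ Finset.range (n + 1),
      (-1 : ℝ) ^ k * (n.choose k : ℝ) *
        iteratedDeriv s₁ (fun t => f₁ t * (g t) ^ k) x *
        iteratedDeriv s₂ (fun t => f₂ t * (g t) ^ (n - k)) x
      = (-1 : ℝ) ^ s₁ * (n.factorial : ℝ) * f₁ x * f₂ x * (deriv g x) ^ n := by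
  have hs₁n : s₁ ≤ n := by omega
  have hs₂n : s₂ ≤ n := by omega
  set c : ℝ := g x with hc
  have hgx : g x = c := hc.symm
  have hgs : ∀ s : ℕ, s ≤ n → ContDiff ℝ (s : ℕ∞) g :=
    fun s h => hg.of_le (by exact_mod_cast Nat.cast_le.mpr h)
  have hf₁' : ContDiff ℝ (s₁ : ℕ∞) f₁ := hf₁.of_le (by exact_mod_cast Nat.cast_le.mpr hs₁n)
  have hf₂' : ContDiff ℝ (s₂ : ℕ∞) f₂ := hf₂.of_le (by exact_mod_cast Nat.cast_le.mpr hs₂n)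
  set P : ℕ → ℝ := fun i => iteratedDeriv s₁ (fun t => f₁ t * (g t - c) ^ i) x with hP
  set Q : ℕ → ℝ := fun j => iteratedDeriv s₂ (fun t => f₂ t * (g t - c) ^ j) x with hQ
  set E : ℕ → ℕ → ℕ → ℝ := fun k i j =>
    (-1 : ℝ) ^ k * (n.choose k : ℝ) * ((k.choose i : ℝ) * c ^ (k - i) * P i) *
      (((n - k).choose j : ℝ) * c ^ (n - k - j) * Q j) with hE
  have hrw : ∀ k ∈ range (n + 1),
      (-1 : ℝ) ^ k * (n.choose k : ℝ) *
          iteratedDeriv s₁ (fun t => f₁ t * (g t) ^ k) x *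
          iteratedDeriv s₂ (fun t => f₂ t * (g t) ^ (n - k)) x
        = ∑ i ∈ range (n + 1), ∑ j ∈ range (n + 1), E k i j := by
    intro k hk
    simp only [mem_range] at hk
    rw [aux_expand n s₁ k (by omega) f₁ g c hf₁' (hgs s₁ hs₁n) x,
      aux_expand n s₂ (n - k) (by omega) f₂ g c hf₂' (hgs s₂ hs₂n) x]
    have expand_prod : ∀ (A B : ℕ → ℝ) (a : ℝ),
        a * (∑ i ∈ range (n+1), A i) * (∑ j ∈ range (n+1), B j)
          = ∑ i ∈ range (n+1), ∑ j ∈ range (n+1), a * A i * B j := by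
      intro A B a
      rw [mul_assoc, Finset.sum_mul_sum, Finset.mul_sum]
      exact Finset.sum_congr rfl fun i _ => by
        rw [Finset.mul_sum]; exact Finset.sum_congr rfl fun j _ => by ring
    rw [expand_prod]
  rw [Finset.sum_congr rfl hrw, Finset.sum_comm]
  have hswap : ∀ i ∈ range (n + 1),
      (∑ k ∈ range (n + 1), ∑ j ∈ range (n + 1), E k i j)
        = ∑ j ∈ range (n + 1), ∑ k ∈ range (n + 1), E k i j :=
    fun i _ => Finset.sum_comm
  rw [Finset.sum_congr rfl hswap]
  -- vanishing of P and Q above the order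
  have hP0 : ∀ i, s₁ < i → P i = 0 := by
    intro i h
    have := aux_key s₁ i f₁ g c x hf₁' (hgs s₁ hs₁n) hgx (le_of_lt h)
    rwa [if_neg (by omega)] at this
  have hQ0 : ∀ j, s₂ < j → Q j = 0 := by
    intro j h
    have := aux_key s₂ j f₂ g c x hf₂' (hgs s₂ hs₂n) hgx (le_of_lt h)
    rwa [if_neg (by omega)] at this
  have key_inner : ∀ i ∈ range (n + 1), ∀ j ∈ range (n + 1), ¬(i = s₁ ∧ j = s₂) →
      ∑ k ∈ range (n + 1), E k i j = 0 := by
    intro i hi j hj hne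
    simp only [mem_range] at hi hj
    by_cases hi1 : s₁ < i
    · exact Finset.sum_eq_zero fun k _ => by simp [hE, hP0 i hi1]
    by_cases hj1 : s₂ < j
    · exact Finset.sum_eq_zero fun k _ => by simp [hE, hQ0 j hj1]
    have hij : i + j < n := by omega
    have hterm : ∀ k ∈ range (n + 1), E k i j
        = (P i * Q j * c ^ (n - i - j)) *
            ((-1 : ℝ) ^ k * ((n.choose k * k.choose i * (n - k).choose j : ℕ) : ℝ)) := by
      intro k hk
      simp only [mem_range] at hk
      by_cases hik : i ≤ k
      · by_cases hjk : j ≤ n - k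
        · have he : (k - i) + (n - k - j) = n - i - j := by omega
          simp only [hE]
          rw [← he, pow_add]
          push_cast
          ring
        · have h0 : (n - k).choose j = 0 := Nat.choose_eq_zero_of_lt (by omega)
          simp [hE, h0]
      · have h0 : k.choose i = 0 := Nat.choose_eq_zero_of_lt (by omega)
        simp [hE, h0]
    rw [Finset.sum_congr rfl hterm, ← Finset.mul_sum, aux_S n i j hij, mul_zero]
  have key_main : ∑ k ∈ range (n + 1), E k s₁ s₂
      = (-1 : ℝ) ^ s₁ * (n.choose s₁ : ℝ) * P s₁ * Q s₂ := by
    rw [Finset.sum_eq_single_of_mem s₁ (by simp only [mem_range]; omega)]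
    · have h1 : n - s₁ = s₂ := by omega
      simp only [hE, h1, Nat.choose_self, Nat.sub_self, pow_zero, Nat.cast_one]
      ring
    · intro k hk hne
      simp only [mem_range] at hk
      by_cases h : k < s₁
      · have h0 : k.choose s₁ = 0 := Nat.choose_eq_zero_of_lt h
        simp [hE, h0]
      · have h0 : (n - k).choose s₂ = 0 := Nat.choose_eq_zero_of_lt (by omega)
        simp [hE, h0]
  rw [Finset.sum_eq_single_of_mem s₁ (by simp only [mem_range]; omega)
      (fun i hi hne => Finset.sum_eq_zero fun j hj => key_inner i hi j hj (by tauto)),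
    Finset.sum_eq_single_of_mem s₂ (by simp only [mem_range]; omega)
      (fun j hj hne => key_inner s₁ (by simp only [mem_range]; omega) j hj (by tauto)),
    key_main]
  have hPv : P s₁ = (s₁.factorial : ℝ) * f₁ x * (deriv g x) ^ s₁ := by
    have := aux_key s₁ s₁ f₁ g c x hf₁' (hgs s₁ hs₁n) hgx le_rfl
    rwa [if_pos rfl] at this
  have hQv : Q s₂ = (s₂.factorial : ℝ) * f₂ x * (deriv g x) ^ s₂ := by
    have := aux_key s₂ s₂ f₂ g c x hf₂' (hgs s₂ hs₂n) hgx le_rfl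
    rwa [if_pos rfl] at this
  rw [hPv, hQv]
  have hfact : (n.choose s₁ : ℝ) * (s₁.factorial : ℝ) * (s₂.factorial : ℝ) = (n.factorial : ℝ) := by
    have := Nat.choose_mul_factorial_mul_factorial hs₁n
    rw [show n - s₁ = s₂ by omega] at this
    exact_mod_cast this
  have hpow : (deriv g x) ^ n = (deriv g x) ^ s₁ * (deriv g x) ^ s₂ := by
    rw [← pow_add, hs]
  rw [hpow]
  linear_combination ((-1 : ℝ) ^ s₁ * f₁ x * f₂ x * (deriv g x) ^ s₁ * (deriv g x) ^ s₂) * hfact
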